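/- Let V be a finite-dimensional vector space over 𝔽₂ with a nondegenerate alternating form ⟨,⟩. For every linear functional α : V → 𝔽₂ there exists a symmetric linear endomorphism F of V (i.e. ⟨Fx,y⟩ = ⟨x,Fy⟩ for all x,y) such that α(c) = ⟨F c, c⟩ for all c ∈ V. -/

import Mathlib

/-- For a finite-dimensional `𝔽₂`-vector space with nondegenerate alternating form `B`,
every linear functional `α` is of the form `α c = B (F c) c` for some symmetric endomorphism `F`. -/
theorem stmt_1 (V : Type*) [AddCommGroup V] [Module (ZMod 2) V]
    [FiniteDimensional (ZMod 2) V]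
    (B : V →ₗ[ZMod 2] V →ₗ[ZMod 2] ZMod 2)
    (hB_nd : ∀ x : V, (∀ y : V, B x y = 0) → x = 0)
    (hB_alt : ∀ x : V, B x x = 0)
    (α : V →ₗ[ZMod 2] ZMod 2) :
    ∃ F : V →ₗ[ZMod 2] V,
      (∀ x y : V, B (F x) y = B x (F y)) ∧ (∀ c : V, α c = B (F c) c) := by
  -- B is symmetric since alternating in char 2
  have hsymm : ∀ x y : V, B x y = B y x := by
    intro x y
    have h := hB_alt (x + y)
    simp only [map_add, LinearMap.add_apply, hB_alt] at h
    have h2 : B x y + B y x = 0 := by linear_combination h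
    rw [CharTwo.add_eq_iff_eq_add] at h2
    simpa using h2
  -- get v with α = B v
  have hnd : LinearMap.BilinForm.Nondegenerate B :=
    ⟨hB_nd, fun y hy => hB_nd y (fun x => by rw [hsymm]; exact hy x)⟩
  obtain ⟨v, hv⟩ := (LinearMap.BilinForm.toDual B hnd).surjective α
  refine ⟨{ toFun := fun x => (B v x) • v,
            map_add' := by intro a b; simp [add_smul],
            map_smul' := by intro m a; simp [smul_smul] }, ?_, ?_⟩
  · intro x y
    simp only [LinearMap.coe_mk, AddHom.coe_mk, map_smul, LinearMap.smul_apply, smul_eq_mul]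
    rw [hsymm v x]
    ring
  · intro c
    have hα : α c = B v c := by rw [← hv]; rfl
    simp only [LinearMap.coe_mk, AddHom.coe_mk, map_smul, LinearMap.smul_apply, smul_eq_mul, hα]
    have : ∀ a : ZMod 2, a * a = a := by decide
    rw [hsymm v c] at *
    rw [this]
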